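/- arXiv:1301.5087 — 8 statements merged into one kernel-verified Lean document; each statement's English description precedes it below -/
import Mathlib

section
/- Let V, U, W be vector spaces over a field and f : V ⊕ U → W ⊕ U a linear map with components f₁₁ : V → W, f₁₂ : U → W, f₂₁ : V → U, f₂₂ : U → U. Suppose range(f₂₁) ⊆ range(id - f₂₂) and ker(id - f₂₂) ⊆ ker(f₁₂). Then the assignment Tr(f)(v) = f₁₁(v) + f₁₂(u), where u is any vector with (id - f₂₂)(u) = f₂₁(v), is a well-defined linear map V → W (i.e., the value does not depend on the choice of u). -/
open LinearMap

variable {K V U U' W : Type*}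

/-- The (1,1) component of a linear map `V × U →ₗ W × U'`. -/
def comp11 [Field K] [AddCommGroup V] [Module K V] [AddCommGroup U] [Module K U]
    [AddCommGroup U'] [Module K U'] [AddCommGroup W] [Module K W]
    (f : V × U →ₗ[K] W × U') : V →ₗ[K] W :=
  (LinearMap.fst K W U') ∘ₗ f ∘ₗ (LinearMap.inl K V U)

/-- The (1,2) component. -/
def comp12 [Field K] [AddCommGroup V] [Module K V] [AddCommGroup U] [Module K U]
    [AddCommGroup U'] [Module K U'] [AddCommGroup W] [Module K W]
    (f : V × U →ₗ[K] W × U') : U →ₗ[K] W :=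
  (LinearMap.fst K W U') ∘ₗ f ∘ₗ (LinearMap.inr K V U)

/-- The (2,1) component. -/
def comp21 [Field K] [AddCommGroup V] [Module K V] [AddCommGroup U] [Module K U]
    [AddCommGroup U'] [Module K U'] [AddCommGroup W] [Module K W]
    (f : V × U →ₗ[K] W × U') : V →ₗ[K] U' :=
  (LinearMap.snd K W U') ∘ₗ f ∘ₗ (LinearMap.inl K V U)

/-- The (2,2) component. -/
def comp22 [Field K] [AddCommGroup V] [Module K V] [AddCommGroup U] [Module K U]
    [AddCommGroup U'] [Module K U'] [AddCommGroup W] [Module K W]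
    (f : V × U →ₗ[K] W × U') : U →ₗ[K] U' :=
  (LinearMap.snd K W U') ∘ₗ f ∘ₗ (LinearMap.inr K V U)

/-- The kernel-image trace class condition. -/
def TraceClass [Field K] [AddCommGroup V] [Module K V] [AddCommGroup U] [Module K U]
    [AddCommGroup W] [Module K W] (f : V × U →ₗ[K] W × U) : Prop :=
  LinearMap.range (comp21 f) ≤ LinearMap.range (LinearMap.id - comp22 f) ∧
    LinearMap.ker (LinearMap.id - comp22 f) ≤ LinearMap.ker (comp12 f)

/-- `T` is the kernel-image partial trace of `f`. -/
def IsTrace [Field K] [AddCommGroup V] [Module K V] [AddCommGroup U] [Module K U]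
    [AddCommGroup W] [Module K W] (f : V × U →ₗ[K] W × U) (T : V →ₗ[K] W) : Prop :=
  ∀ (v : V) (u : U), ((LinearMap.id - comp22 f : U →ₗ[K] U)) u = comp21 f v →
    T v = comp11 f v + comp12 f u

/-- under the kernel-image trace class conditions, the assignment
`v ↦ f₁₁ v + f₁₂ u` (for any `u` with `(id - f₂₂) u = f₂₁ v`) is a well-defined
linear map `V → W`. -/
theorem kernel_image_trace_well_defined
    [Field K] [AddCommGroup V] [Module K V] [AddCommGroup U] [Module K U]
    [AddCommGroup W] [Module K W] (f : V × U →ₗ[K] W × U)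
    (him : LinearMap.range (comp21 f) ≤ LinearMap.range (LinearMap.id - comp22 f))
    (hker : LinearMap.ker (LinearMap.id - comp22 f) ≤ LinearMap.ker (comp12 f)) :
    ∃ T : V →ₗ[K] W, IsTrace f T := by
  classical
  -- choose a preimage for each v
  have hsec : ∀ v : V, ∃ u : U,
      ((LinearMap.id - comp22 f : U →ₗ[K] U)) u = comp21 f v := by
    intro v
    exact him ⟨v, rfl⟩
  choose g hg using hsec
  -- well-definedness of f₁₂ on preimages
  have hwd : ∀ u u' : U,
      ((LinearMap.id - comp22 f : U →ₗ[K] U)) u =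
        ((LinearMap.id - comp22 f : U →ₗ[K] U)) u' →
      comp12 f u = comp12 f u' := by
    intro u u' h
    have : u - u' ∈ LinearMap.ker (LinearMap.id - comp22 f : U →ₗ[K] U) := by
      simp [LinearMap.mem_ker, map_sub, h]
    have := hker this
    rw [LinearMap.mem_ker, map_sub, sub_eq_zero] at this
    exact this
  refine ⟨{ toFun := fun v => comp11 f v + comp12 f (g v)
            map_add' := ?_
            map_smul' := ?_ }, ?_⟩
  · intro x y
    have : comp12 f (g (x + y)) = comp12 f (g x) + comp12 f (g y) := by
      rw [← map_add]
      apply hwd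
      simp [hg, map_add]
    rw [map_add, this]; abel
  · intro c x
    have : comp12 f (g (c • x)) = c • comp12 f (g x) := by
      rw [← map_smul]
      apply hwd
      simp [hg, map_smul]
    simp only [map_smul, RingHom.id_apply, this, smul_add]
  · intro v u hu
    have : comp12 f (g v) = comp12 f u := hwd _ _ (by rw [hg, hu])
    simp [this]
end

section
/- Let U be a vector space and σ : U ⊕ U → U ⊕ U the swap map σ(u,v) = (v,u). Then σ satisfies the kernel-image trace class conditions (im σ₂₁ ⊆ im(id - σ₂₂) and ker(id - σ₂₂) ⊆ ker σ₁₂), and the resulting partial trace Tr(σ) equals the identity on U (yanking axiom). -/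
open LinearMap

variable {K V U U' W : Type*}

/-- the swap map on `U ⊕ U` is in the kernel-image trace class and its
partial trace is the identity (yanking). -/
theorem kernel_image_trace_yanking
    [Field K] [AddCommGroup U] [Module K U] :
    TraceClass ((LinearEquiv.prodComm K U U).toLinearMap) ∧
      IsTrace ((LinearEquiv.prodComm K U U).toLinearMap) (LinearMap.id) := by
  constructor
  · constructor
    · intro x hx
      simp only [comp22, comp21, mem_range] at hx ⊢
      obtain ⟨v, hv⟩ := hx
      exact ⟨x, by simp⟩
    · intro u hu
      simp only [comp22, comp12, mem_ker] at hu ⊢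
      simp at hu
      simp [hu]
  · intro v u hu
    simp only [comp11, comp12, comp21, comp22] at *
    simp at hu
    simp [hu]
end

section
/- Let f : V ⊕ U → W ⊕ U be a linear map satisfying the kernel-image trace class conditions, and let g : V' → V, h : W → W' be linear maps. Then (h ⊕ id_U) ∘ f ∘ (g ⊕ id_U) also satisfies the trace class conditions, and Tr((h ⊕ 1)∘f∘(g ⊕ 1)) = h ∘ Tr(f) ∘ g (naturality of the kernel-image partial trace). -/
open LinearMap

variable {K V U U' W : Type*}

/-- naturality of the kernel-image partial trace. -/
theorem kernel_image_trace_naturality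
    {V' W' : Type*}
    [Field K] [AddCommGroup V] [Module K V] [AddCommGroup U] [Module K U]
    [AddCommGroup W] [Module K W] [AddCommGroup V'] [Module K V']
    [AddCommGroup W'] [Module K W']
    (f : V × U →ₗ[K] W × U) (g : V' →ₗ[K] V) (h : W →ₗ[K] W')
    (hf : TraceClass f) :
    TraceClass ((h.prodMap (LinearMap.id : U →ₗ[K] U)) ∘ₗ f ∘ₗ
        (g.prodMap (LinearMap.id : U →ₗ[K] U))) ∧
      ∀ T : V →ₗ[K] W, IsTrace f T →
        IsTrace ((h.prodMap (LinearMap.id : U →ₗ[K] U)) ∘ₗ f ∘ₗ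
            (g.prodMap (LinearMap.id : U →ₗ[K] U))) (h ∘ₗ T ∘ₗ g) := by
  set F := ((h.prodMap (LinearMap.id : U →ₗ[K] U)) ∘ₗ f ∘ₗ
      (g.prodMap (LinearMap.id : U →ₗ[K] U))) with hF
  have e11 : comp11 F = h ∘ₗ comp11 f ∘ₗ g := by
    ext v; simp [hF, comp11]
  have e12 : comp12 F = h ∘ₗ comp12 f := by
    ext u; simp [hF, comp12]
  have e21 : comp21 F = comp21 f ∘ₗ g := by
    ext v; simp [hF, comp21]
  have e22 : comp22 F = comp22 f := by
    ext u; simp [hF, comp22]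
  obtain ⟨h1, h2⟩ := hf
  refine ⟨⟨?_, ?_⟩, ?_⟩
  · rintro u ⟨v, rfl⟩
    rw [e21]
    exact (e22 ▸ h1) ⟨g v, rfl⟩
  · intro u hu
    rw [LinearMap.mem_ker, e12]
    have : u ∈ LinearMap.ker (LinearMap.id - comp22 f) := by
      rw [LinearMap.mem_ker]; rw [e22] at hu; exact hu
    simpa using congrArg h (h2 this)
  · intro T hT v u hu
    rw [e22, e21] at hu
    have := hT (g v) u hu
    simp [e11, e12, this]
end

section
/- Let f : X ⊕ U → Y ⊕ U' and g : U' → U be linear maps. Then (id_Y ⊕ g) ∘ f satisfies the kernel-image trace class conditions with respect to U if and only if f ∘ (id_X ⊕ g) satisfies them with respect to U', and in that case the two partial traces coincide: Tr^U((1 ⊕ g) f) = Tr^{U'}(f (1 ⊕ g)) (dinaturality). -/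
open LinearMap

variable {K V U U' W : Type*}

section Aux

variable {K X Y : Type*} {U U' : Type*}
variable [Field K] [AddCommGroup X] [Module K X] [AddCommGroup Y] [Module K Y]
variable [AddCommGroup U] [Module K U] [AddCommGroup U'] [Module K U']

private lemma c11h (f : X × U →ₗ[K] Y × U') (g : U' →ₗ[K] U) :
    comp11 (((LinearMap.id : Y →ₗ[K] Y).prodMap g) ∘ₗ f) = comp11 f :=
  LinearMap.ext fun _ => rfl

private lemma c12h (f : X × U →ₗ[K] Y × U') (g : U' →ₗ[K] U) :
    comp12 (((LinearMap.id : Y →ₗ[K] Y).prodMap g) ∘ₗ f) = comp12 f :=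
  LinearMap.ext fun _ => rfl

private lemma c21h (f : X × U →ₗ[K] Y × U') (g : U' →ₗ[K] U) :
    comp21 (((LinearMap.id : Y →ₗ[K] Y).prodMap g) ∘ₗ f) = g ∘ₗ comp21 f :=
  LinearMap.ext fun _ => rfl

private lemma c22h (f : X × U →ₗ[K] Y × U') (g : U' →ₗ[K] U) :
    comp22 (((LinearMap.id : Y →ₗ[K] Y).prodMap g) ∘ₗ f) = g ∘ₗ comp22 f :=
  LinearMap.ext fun _ => rfl

private lemma c11k (f : X × U →ₗ[K] Y × U') (g : U' →ₗ[K] U) :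
    comp11 (f ∘ₗ ((LinearMap.id : X →ₗ[K] X).prodMap g)) = comp11 f := by
  ext x; simp [comp11]

private lemma c12k (f : X × U →ₗ[K] Y × U') (g : U' →ₗ[K] U) :
    comp12 (f ∘ₗ ((LinearMap.id : X →ₗ[K] X).prodMap g)) = comp12 f ∘ₗ g :=
  LinearMap.ext fun _ => rfl

private lemma c21k (f : X × U →ₗ[K] Y × U') (g : U' →ₗ[K] U) :
    comp21 (f ∘ₗ ((LinearMap.id : X →ₗ[K] X).prodMap g)) = comp21 f := by
  ext x; simp [comp21]

private lemma c22k (f : X × U →ₗ[K] Y × U') (g : U' →ₗ[K] U) :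
    comp22 (f ∘ₗ ((LinearMap.id : X →ₗ[K] X).prodMap g)) = comp22 f ∘ₗ g :=
  LinearMap.ext fun _ => rfl

end Aux

/-- dinaturality of the kernel-image partial trace. -/
theorem kernel_image_trace_dinaturality
    {X Y : Type*}
    [Field K] [AddCommGroup X] [Module K X] [AddCommGroup Y] [Module K Y]
    [AddCommGroup U] [Module K U] [AddCommGroup U'] [Module K U']
    (f : X × U →ₗ[K] Y × U') (g : U' →ₗ[K] U) :
    (TraceClass (((LinearMap.id : Y →ₗ[K] Y).prodMap g) ∘ₗ f) ↔
        TraceClass (f ∘ₗ ((LinearMap.id : X →ₗ[K] X).prodMap g))) ∧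
      (TraceClass (((LinearMap.id : Y →ₗ[K] Y).prodMap g) ∘ₗ f) →
        ∀ T T' : X →ₗ[K] Y,
          IsTrace (((LinearMap.id : Y →ₗ[K] Y).prodMap g) ∘ₗ f) T →
          IsTrace (f ∘ₗ ((LinearMap.id : X →ₗ[K] X).prodMap g)) T' →
          T = T') := by
  classical
  have hq : ∀ x : X, ∃ u : U, (u - g (comp22 f u) = g (comp21 f x)) →
      True := fun _ => ⟨0, fun _ => trivial⟩
  -- forward transfer of witnesses
  have fwd : ∀ x u, u - g (comp22 f u) = g (comp21 f x) →
      (comp21 f x + comp22 f u) - comp22 f (g (comp21 f x + comp22 f u)) = comp21 f x := by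
    intro x u hu
    rw [map_add, map_add, ← hu, map_sub]
    abel
  have gw : ∀ x u, u - g (comp22 f u) = g (comp21 f x) →
      g (comp21 f x + comp22 f u) = u := by
    intro x u hu
    rw [map_add, ← hu]
    abel
  have hiff : TraceClass (((LinearMap.id : Y →ₗ[K] Y).prodMap g) ∘ₗ f) ↔
      TraceClass (f ∘ₗ ((LinearMap.id : X →ₗ[K] X).prodMap g)) := by
    constructor
    · rintro ⟨hr, hker⟩
      simp only [c21h, c22h, c12h] at hr hker
      simp only [TraceClass, c21k, c22k, c12k]
      constructor
      · rintro _ ⟨x, rfl⟩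
        have : g (comp21 f x) ∈ LinearMap.range (LinearMap.id - g ∘ₗ comp22 f) :=
          hr ⟨x, rfl⟩
        obtain ⟨u, hu⟩ := this
        simp only [LinearMap.sub_apply, LinearMap.id_apply, LinearMap.comp_apply] at hu
        exact ⟨comp21 f x + comp22 f u, by
          simpa [LinearMap.sub_apply, LinearMap.comp_apply] using fwd x u hu⟩
      · intro u' hu'
        simp only [LinearMap.mem_ker, LinearMap.sub_apply, LinearMap.id_apply,
          LinearMap.comp_apply] at hu' ⊢
        have : g u' ∈ LinearMap.ker (LinearMap.id - g ∘ₗ comp22 f) := by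
          simp only [LinearMap.mem_ker, LinearMap.sub_apply, LinearMap.id_apply,
            LinearMap.comp_apply]
          rw [sub_eq_zero] at hu' ⊢
          conv_lhs => rw [hu']
        simpa using hker this
    · rintro ⟨hr, hker⟩
      simp only [c21k, c22k, c12k] at hr hker
      simp only [TraceClass, c21h, c22h, c12h]
      constructor
      · rintro _ ⟨x, rfl⟩
        obtain ⟨v, hv⟩ := hr (⟨x, rfl⟩ : comp21 f x ∈ LinearMap.range (comp21 f))
        simp only [LinearMap.sub_apply, LinearMap.id_apply, LinearMap.comp_apply] at hv
        refine ⟨g v, ?_⟩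
        simp only [LinearMap.sub_apply, LinearMap.id_apply, LinearMap.comp_apply]
        rw [← map_sub, hv]
      · intro u hu
        simp only [LinearMap.mem_ker, LinearMap.sub_apply, LinearMap.id_apply,
          LinearMap.comp_apply] at hu
        have hmem : comp22 f u ∈ LinearMap.ker (LinearMap.id - comp22 f ∘ₗ g) := by
          simp only [LinearMap.mem_ker, LinearMap.sub_apply, LinearMap.id_apply,
            LinearMap.comp_apply]
          rw [← map_sub, hu, map_zero]
        have h0 := hker hmem
        simp only [LinearMap.mem_ker, LinearMap.comp_apply] at h0
        rw [sub_eq_zero] at hu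
        rw [LinearMap.mem_ker, hu]
        exact h0
  refine ⟨hiff, ?_⟩
  rintro ⟨hr, _⟩ T T' hT hT'
  simp only [c21h, c22h] at hr
  ext x
  obtain ⟨u, hu⟩ := hr (⟨x, rfl⟩ : g (comp21 f x) ∈ LinearMap.range (g ∘ₗ comp21 f))
  simp only [LinearMap.sub_apply, LinearMap.id_apply, LinearMap.comp_apply] at hu
  have e1 : T x = comp11 f x + comp12 f u := by
    have := hT x u (by
      rw [c21h, c22h]
      simpa [LinearMap.sub_apply, LinearMap.comp_apply] using hu)
    rwa [c11h, c12h] at this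
  have e2 : T' x = comp11 f x + comp12 f (g (comp21 f x + comp22 f u)) := by
    have := hT' x (comp21 f x + comp22 f u) (by
      rw [c21k, c22k]
      simpa [LinearMap.sub_apply, LinearMap.comp_apply] using fwd x u hu)
    rwa [c11k, c12k] at this
  rw [e1, e2, gw x u hu]
end

section
/- Let f : X ⊕ U → Y ⊕ U satisfy the kernel-image trace class conditions and let g : W → Z be any linear map. Then g ⊕ f : (W ⊕ X) ⊕ U → (Z ⊕ Y) ⊕ U (with appropriate associativity rearrangement) satisfies the trace class conditions, and Tr(g ⊕ f) = g ⊕ Tr(f) (superposing axiom). -/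
open LinearMap

variable {K V U U' W : Type*}

/-- superposing axiom for the kernel-image partial trace. -/
theorem kernel_image_trace_superposing
    {X Y Z W₀ : Type*}
    [Field K] [AddCommGroup X] [Module K X] [AddCommGroup Y] [Module K Y]
    [AddCommGroup U] [Module K U] [AddCommGroup Z] [Module K Z]
    [AddCommGroup W₀] [Module K W₀]
    (f : X × U →ₗ[K] Y × U) (g : W₀ →ₗ[K] Z)
    (hf : TraceClass f) :
    TraceClass ((LinearEquiv.prodAssoc K Z Y U).symm.toLinearMap ∘ₗ
        (g.prodMap f) ∘ₗ (LinearEquiv.prodAssoc K W₀ X U).toLinearMap) ∧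
      ∀ Tf : X →ₗ[K] Y, IsTrace f Tf →
        IsTrace ((LinearEquiv.prodAssoc K Z Y U).symm.toLinearMap ∘ₗ
            (g.prodMap f) ∘ₗ (LinearEquiv.prodAssoc K W₀ X U).toLinearMap)
          (g.prodMap Tf) := by
  classical
  obtain ⟨hf1, hf2⟩ := hf
  set h := ((LinearEquiv.prodAssoc K Z Y U).symm.toLinearMap ∘ₗ
      (g.prodMap f) ∘ₗ (LinearEquiv.prodAssoc K W₀ X U).toLinearMap) with hh
  have h11 : ∀ p : W₀ × X, comp11 h p = (g p.1, comp11 f p.2) := by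
    intro p; simp [comp11, h, LinearEquiv.prodAssoc]
  have h12 : ∀ u : U, comp12 h u = ((0 : Z), comp12 f u) := by
    intro u; simp [comp12, h, LinearEquiv.prodAssoc]
  have h21 : ∀ p : W₀ × X, comp21 h p = comp21 f p.2 := by
    intro p; simp [comp21, h, LinearEquiv.prodAssoc]
  have h22 : ∀ u : U, comp22 h u = comp22 f u := by
    intro u; simp [comp22, h, LinearEquiv.prodAssoc]
  refine ⟨⟨?_, ?_⟩, ?_⟩
  · rintro u ⟨p, rfl⟩
    rw [h21]
    obtain ⟨u', hu'⟩ := hf1 ⟨p.2, rfl⟩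
    exact ⟨u', by simpa [h22 u'] using hu'⟩
  · intro u hu
    simp only [LinearMap.mem_ker, LinearMap.sub_apply, LinearMap.id_apply, h22] at hu
    have := hf2 (by simpa using hu)
    simp only [LinearMap.mem_ker] at this ⊢
    rw [h12, this, Prod.mk_eq_zero]; exact ⟨rfl, rfl⟩
  · intro Tf hTf p u hu
    simp only [LinearMap.sub_apply, LinearMap.id_apply, h22, h21] at hu
    have := hTf p.2 u (by simpa using hu)
    rw [h11, h12]
    ext <;> simp [this]
end

section
/- If f : V ⊕ U → W ⊕ U is a linear map between finite dimensional vector spaces such that I - f₂₂ is invertible, then f satisfies the kernel-image trace class conditions (im f₂₁ ⊆ im(I - f₂₂) and ker(I - f₂₂) ⊆ ker f₁₂), and the kernel-image partial trace equals f₁₁ + f₁₂ ∘ (I - f₂₂)⁻¹ ∘ f₂₁. -/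
open LinearMap

variable {K V U U' W : Type*}

/-- if `I - f₂₂` is invertible (finite dimensions), then `f` is in the
kernel-image trace class and the partial trace is `f₁₁ + f₁₂ ∘ (I - f₂₂)⁻¹ ∘ f₂₁`. -/
theorem kernel_image_trace_of_invertible
    [Field K] [AddCommGroup V] [Module K V] [AddCommGroup U] [Module K U]
    [AddCommGroup W] [Module K W]
    [FiniteDimensional K V] [FiniteDimensional K U] [FiniteDimensional K W]
    (f : V × U →ₗ[K] W × U) (g : U →ₗ[K] U)
    (hg1 : g ∘ₗ (LinearMap.id - comp22 f) = LinearMap.id)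
    (hg2 : (LinearMap.id - comp22 f) ∘ₗ g = LinearMap.id) :
    TraceClass f ∧ IsTrace f (comp11 f + comp12 f ∘ₗ g ∘ₗ comp21 f) := by
  have hinj : Function.Injective (LinearMap.id - comp22 f : U →ₗ[K] U) := by
    intro a b hab
    have h1 := LinearMap.congr_fun hg1 a
    have h2 := LinearMap.congr_fun hg1 b
    simp only [LinearMap.comp_apply, LinearMap.id_apply] at h1 h2
    rw [← h1, ← h2, hab]
  constructor
  · constructor
    · intro u hu
      exact ⟨g u, by have := LinearMap.congr_fun hg2 u; simpa using this⟩
    · intro u hu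
      have : u = 0 := by
        apply hinj
        simpa using hu
      simp [this]
  · intro v u hu
    have hu' : u = g (comp21 f v) := by
      apply hinj
      rw [hu]
      have := LinearMap.congr_fun hg2 (comp21 f v)
      simpa using this.symm
    simp [hu']
end

section
/- Let f : X × U → Y × U be a finite stochastic relation in the trace class over U, and g : W → Z any finite stochastic relation. Then g ⊗ f is in the trace class over U and Tr^U(g ⊗ f) = g ⊗ Tr^U(f). -/
open Finset

/-- A finite (sub)stochastic relation from `A` to `B`: a matrix with entries in `[0,1]`
whose columns sum to at most `1`. -/
def SubStoch {A B : Type*} [Fintype B] (f : B → A → ℝ) : Prop :=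
  (∀ b a, 0 ≤ f b a ∧ f b a ≤ 1) ∧ ∀ a, ∑ b, f b a ≤ 1

/-- superposing for the stochastic partial trace:
`g ⊗ f` is in the trace class over `U` and `Tr^U(g ⊗ f) = g ⊗ Tr^U(f)`. -/
theorem stochastic_partial_trace_superposing
    {X Y U W Z : Type*} [Fintype X] [Fintype Y] [Fintype U] [Fintype W] [Fintype Z]
    (f : (Y × U) → (X × U) → ℝ) (hf : SubStoch f)
    (htc : ∀ x : X, ∑ y : Y, ∑ u : U, f (y, u) (x, u) ≤ 1)
    (g : Z → W → ℝ) (hg : SubStoch g) :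
    (∀ (w : W) (x : X),
        ∑ z : Z, ∑ y : Y, ∑ u : U, g z w * f (y, u) (x, u) ≤ 1) ∧
    (fun (p : Z × Y) (q : W × X) =>
        ∑ u : U, g p.1 q.1 * f (p.2, u) (q.2, u)) =
      (fun (p : Z × Y) (q : W × X) =>
        g p.1 q.1 * ∑ u : U, f (p.2, u) (q.2, u)) := by
  constructor
  · intro w x
    calc ∑ z : Z, ∑ y : Y, ∑ u : U, g z w * f (y, u) (x, u)
        = (∑ z : Z, g z w) * ∑ y : Y, ∑ u : U, f (y, u) (x, u) := by
          rw [Finset.sum_mul]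
          exact Finset.sum_congr rfl fun z _ => by rw [Finset.mul_sum]; exact Finset.sum_congr rfl fun y _ => (Finset.mul_sum _ _ _).symm
      _ ≤ 1 * 1 := by
          apply mul_le_mul (hg.2 w) (htc x) ?_ ?_
          · exact Finset.sum_nonneg fun y _ => Finset.sum_nonneg fun u _ => (hf.1 _ _).1
          · linarith [hg.2 w, Finset.sum_nonneg (s := Finset.univ) fun z (_ : z ∈ Finset.univ) => (hg.1 z w).1]
      _ = 1 := one_mul 1
  · funext p q
    rw [Finset.mul_sum]
end

section
/- Let C be a symmetric monoidal category whose tensor unit I is a terminal object (an affine category). Then there is a fully faithful strong monoidal functor Φ : (FinSet, ×, 1) → (C⁺, ⊗, I) from finite sets with cartesian product into the finite coproduct completion of C, which moreover preserves finite coproducts. Here Φ(A) = {I}_{a∈A} (the constant family at the unit) and Φ(φ) = (φ, {id_I}). -/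
open CategoryTheory CategoryTheory.Limits

universe v u

/-- An object of the finite coproduct completion `C⁺` of a category `C`:
a finite family of objects of `C` indexed by a finite (index) set. -/
structure FamObj (C : Type u) where
  ι : Type
  [fin : Fintype ι]
  obj : ι → C

attribute [instance] FamObj.fin

variable {C : Type u} [Category.{v} C]

/-- The finite coproduct completion `C⁺` as a category: a morphism
`{V_a}_{a∈A} → {W_b}_{b∈B}` is a pair of a reindexing function `φ : A → B` and a
family of morphisms `f_a : V_a → W_{φ a}` of `C`. -/
instance FamObj.category : Category (FamObj C) where
  Hom X Y := Σ' φ : X.ι → Y.ι, ∀ a : X.ι, X.obj a ⟶ Y.obj (φ a)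
  id X := ⟨fun a => a, fun a => 𝟙 (X.obj a)⟩
  comp f g := ⟨fun a => g.1 (f.1 a), fun a => f.2 a ≫ g.2 (f.1 a)⟩
  id_comp f := congrArg (PSigma.mk f.1) (funext fun a => Category.id_comp (f.2 a))
  comp_id f := congrArg (PSigma.mk f.1) (funext fun a => Category.comp_id (f.2 a))
  assoc f g h := congrArg (PSigma.mk fun a => h.1 (g.1 (f.1 a)))
    (funext fun a => Category.assoc (f.2 a) (g.2 (f.1 a)) (h.2 (g.1 (f.1 a))))

/-- Concatenation of two finite families: the coproduct in `C⁺`. -/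
def FamObj.concat (X Y : FamObj C) : FamObj C where
  ι := X.ι ⊕ Y.ι
  obj := Sum.elim X.obj Y.obj

/-- The first coproduct injection into a concatenated family. -/
def FamObj.concatInl (X Y : FamObj C) : X ⟶ X.concat Y :=
  ⟨Sum.inl, fun a => 𝟙 (X.obj a)⟩

/-- The second coproduct injection into a concatenated family. -/
def FamObj.concatInr (X Y : FamObj C) : Y ⟶ X.concat Y :=
  ⟨Sum.inr, fun b => 𝟙 (Y.obj b)⟩

/-- The empty family, the initial object of `C⁺`. -/
def FamObj.empty (C : Type u) : FamObj C where
  ι := PEmpty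
  obj := PEmpty.elim

section Aux

variable {C : Type u} [Category.{v} C]

@[simp] lemma FamObj.comp_fst {X Y Z : FamObj C} (f : X ⟶ Y) (g : Y ⟶ Z) (a : X.ι) :
    (f ≫ g).1 a = g.1 (f.1 a) := rfl

@[simp] lemma FamObj.comp_snd {X Y Z : FamObj C} (f : X ⟶ Y) (g : Y ⟶ Z) (a : X.ι) :
    (f ≫ g).2 a = f.2 a ≫ g.2 (f.1 a) := rfl

@[simp] lemma FamObj.id_fst (X : FamObj C) (a : X.ι) : (𝟙 X : X ⟶ X).1 a = a := rfl

@[simp] lemma FamObj.id_snd (X : FamObj C) (a : X.ι) : (𝟙 X : X ⟶ X).2 a = 𝟙 (X.obj a) := rfl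

lemma FamObj.hom_ext {X Y : FamObj C} {f g : X ⟶ Y} (h1 : f.1 = g.1)
    (h2 : ∀ a : X.ι, f.2 a ≫ eqToHom (congrArg Y.obj (congrFun h1 a)) = g.2 a) : f = g := by
  obtain ⟨φ, fc⟩ := f
  obtain ⟨ψ, gc⟩ := g
  dsimp at h1
  subst h1
  simp only [eqToHom_refl, Category.comp_id] at h2
  exact congrArg (PSigma.mk φ) (funext h2)

lemma FamObj.hom_congr {X Y : FamObj C} {f g : X ⟶ Y} (h : f = g) (a : X.ι) :
    f.2 a ≫ eqToHom (congrArg Y.obj (congrFun (congrArg PSigma.fst h) a)) = g.2 a := by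
  subst h; simp

end Aux

open MonoidalCategory in
/-- The cartesian monoidal structure on `FintypeCat`. -/
def finMC : MonoidalCategory FintypeCat.{0} where
  tensorObj A B := FintypeCat.of (A × B)
  whiskerLeft X _ _ f := FintypeCat.homMk fun p => (p.1, f p.2)
  whiskerRight f Y := FintypeCat.homMk fun p => (f p.1, p.2)
  tensorHom f g := FintypeCat.homMk fun p => (f p.1, g p.2)
  tensorUnit := FintypeCat.of PUnit
  associator X Y Z :=
    { hom := FintypeCat.homMk fun p => (p.1.1, (p.1.2, p.2))
      inv := FintypeCat.homMk fun p => ((p.1, p.2.1), p.2.2)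
      hom_inv_id := rfl
      inv_hom_id := rfl }
  leftUnitor X :=
    { hom := FintypeCat.homMk fun p => p.2
      inv := FintypeCat.homMk fun a => (PUnit.unit, a)
      hom_inv_id := rfl
      inv_hom_id := rfl }
  rightUnitor X :=
    { hom := FintypeCat.homMk fun p => p.1
      inv := FintypeCat.homMk fun a => (a, PUnit.unit)
      hom_inv_id := rfl
      inv_hom_id := rfl }
  tensorHom_def _ _ := rfl
  id_tensorHom_id _ _ := rfl
  tensorHom_comp_tensorHom _ _ _ _ := rfl
  whiskerLeft_id _ _ := rfl
  id_whiskerRight _ _ := rfl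
  associator_naturality _ _ _ := rfl
  leftUnitor_naturality _ := rfl
  rightUnitor_naturality _ := rfl
  pentagon _ _ _ _ := rfl
  triangle _ _ := rfl

open MonoidalCategory in
/-- The monoidal structure data on the finite coproduct completion induced from `C`. -/
@[simps, reducible]
def famMS (C : Type u) [Category.{v} C] [MonoidalCategory C] :
    MonoidalCategoryStruct (FamObj C) where
  tensorObj X Y := { ι := X.ι × Y.ι, obj := fun p => X.obj p.1 ⊗ Y.obj p.2 }
  whiskerLeft X _ _ f := ⟨fun p => (p.1, f.1 p.2), fun p => X.obj p.1 ◁ f.2 p.2⟩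
  whiskerRight f Y := ⟨fun p => (f.1 p.1, p.2), fun p => f.2 p.1 ▷ Y.obj p.2⟩
  tensorHom f g := ⟨fun p => (f.1 p.1, g.1 p.2), fun p => f.2 p.1 ⊗ₘ g.2 p.2⟩
  tensorUnit := { ι := PUnit, obj := fun _ => 𝟙_ C }
  associator X Y Z :=
    { hom := ⟨fun p => (p.1.1, (p.1.2, p.2)), fun p => (α_ _ _ _).hom⟩
      inv := ⟨fun p => ((p.1, p.2.1), p.2.2), fun p => (α_ _ _ _).inv⟩
      hom_inv_id := FamObj.hom_ext rfl (fun a => by simp)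
      inv_hom_id := FamObj.hom_ext rfl (fun a => by simp) }
  leftUnitor X :=
    { hom := ⟨fun p => p.2, fun p => (λ_ _).hom⟩
      inv := ⟨fun a => (PUnit.unit, a), fun a => (λ_ _).inv⟩
      hom_inv_id := FamObj.hom_ext rfl (fun a => by simp)
      inv_hom_id := FamObj.hom_ext rfl (fun a => by simp) }
  rightUnitor X :=
    { hom := ⟨fun p => p.1, fun p => (ρ_ _).hom⟩
      inv := ⟨fun a => (a, PUnit.unit), fun a => (ρ_ _).inv⟩
      hom_inv_id := FamObj.hom_ext rfl (fun a => by simp)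
      inv_hom_id := FamObj.hom_ext rfl (fun a => by simp) }

open MonoidalCategory in
/-- The monoidal structure on the finite coproduct completion induced from `C`. -/
def famMC (C : Type u) [Category.{v} C] [MonoidalCategory C] :
    MonoidalCategory (FamObj C) :=
  letI : MonoidalCategoryStruct (FamObj C) := famMS C
  { tensorHom_def := fun f g => FamObj.hom_ext rfl (fun a => by
      simp [famMS, MonoidalCategory.tensorHom_def])
    id_tensorHom_id := fun _ _ => FamObj.hom_ext rfl (fun a => by simp [famMS])
    tensorHom_comp_tensorHom := fun f₁ f₂ g₁ g₂ => FamObj.hom_ext rfl (fun a => by simp [famMS])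
    whiskerLeft_id := fun _ _ => FamObj.hom_ext rfl (fun a => by simp [famMS])
    id_whiskerRight := fun _ _ => FamObj.hom_ext rfl (fun a => by simp [famMS])
    associator_naturality := fun f₁ f₂ f₃ => FamObj.hom_ext rfl (fun a => by
      simp [famMS, associator_naturality])
    leftUnitor_naturality := fun f => FamObj.hom_ext rfl (fun a => by
      simp [famMS, leftUnitor_naturality])
    rightUnitor_naturality := fun f => FamObj.hom_ext rfl (fun a => by
      simp [famMS, rightUnitor_naturality])
    pentagon := fun _ _ _ _ => FamObj.hom_ext rfl (fun a => by simp [famMS, pentagon])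
    triangle := fun _ _ => FamObj.hom_ext rfl (fun a => by simp [famMS]) }

section Phi

open MonoidalCategory

variable (C : Type u) [Category.{v} C] [MonoidalCategory C]

attribute [local instance] finMC famMC

/-- The embedding `Φ : FinSet → C⁺`, `A ↦ {I}_{a ∈ A}`. -/
noncomputable def Phi : FintypeCat.{0} ⥤ FamObj C where
  obj A := { ι := A, fin := FintypeCat.fintype, obj := fun _ => 𝟙_ C }
  map f := ⟨fun a => f a, fun _ => 𝟙 (𝟙_ C)⟩
  map_id A := rfl
  map_comp f g := FamObj.hom_ext rfl (fun a => by simp)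

theorem Phi_full (hI : IsTerminal (𝟙_ C)) : (Phi C).Full where
  map_surjective {A B} g := ⟨FintypeCat.homMk g.1, FamObj.hom_ext rfl (fun a => hI.hom_ext _ _)⟩

instance Phi_faithful : (Phi C).Faithful where
  map_injective {A B} {f g} h := FintypeCat.hom_ext _ _ fun a => congrFun (congrArg PSigma.fst h) a

/-- `Φ` is a (strong) monoidal functor. -/
def PhiCore (hI : IsTerminal (𝟙_ C)) : (Phi C).CoreMonoidal where
  εIso :=
    { hom := ⟨fun _ => PUnit.unit, fun _ => 𝟙 (𝟙_ C)⟩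
      inv := ⟨fun _ => PUnit.unit, fun _ => 𝟙 (𝟙_ C)⟩
      hom_inv_id := FamObj.hom_ext (funext fun _ => rfl) (fun a => hI.hom_ext _ _)
      inv_hom_id := FamObj.hom_ext (funext fun _ => rfl) (fun a => hI.hom_ext _ _) }
  μIso X Y :=
    { hom := ⟨fun p => p, fun _ => (λ_ (𝟙_ C)).hom⟩
      inv := ⟨fun p => p, fun _ => (λ_ (𝟙_ C)).inv⟩
      hom_inv_id := FamObj.hom_ext rfl (fun a => by simp; exact Iso.hom_inv_id _)
      inv_hom_id := FamObj.hom_ext rfl (fun a => by simp; exact Iso.inv_hom_id _) }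
  μIso_hom_natural_left f X' := FamObj.hom_ext rfl (fun a => hI.hom_ext _ _)
  μIso_hom_natural_right X' f := FamObj.hom_ext rfl (fun a => hI.hom_ext _ _)
  associativity X Y Z := FamObj.hom_ext rfl (fun a => hI.hom_ext _ _)
  left_unitality X := FamObj.hom_ext rfl (fun a => hI.hom_ext _ _)
  right_unitality X := FamObj.hom_ext rfl (fun a => hI.hom_ext _ _)

end Phi

section Coprod

open MonoidalCategory Limits

variable (C : Type u) [Category.{v} C] [MonoidalCategory C]

/-- The canonical finite coproduct cocone in `FintypeCat`. -/
def finCofan (J : Type) [Fintype J] (f : J → FintypeCat.{0}) :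
    Cocone (Discrete.functor f) where
  pt := FintypeCat.of (Σ j, f j)
  ι := Discrete.natTrans fun j => (FintypeCat.homMk fun x => ⟨j.as, x⟩ : f j.as ⟶ FintypeCat.of (Σ j, f j))

/-- The canonical cocone is a colimit. -/
def finCofanIsColimit (J : Type) [Fintype J] (f : J → FintypeCat.{0}) :
    IsColimit (finCofan J f) where
  desc s := FintypeCat.homMk fun p => s.ι.app ⟨p.1⟩ p.2
  fac s j := rfl
  uniq s m hm := FintypeCat.hom_ext _ _ fun p => ConcreteCategory.congr_hom (hm ⟨p.1⟩) p.2

/-- `Φ` maps the canonical coproduct cocone to a colimit cocone. -/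
def PhiMapIsColimit (J : Type) [Fintype J] (f : J → FintypeCat.{0}) :
    IsColimit ((Phi C).mapCocone (finCofan J f)) where
  desc s := ⟨fun (p : Σ j, f j) => (s.ι.app ⟨p.1⟩).1 p.2, fun (p : Σ j, f j) => (s.ι.app ⟨p.1⟩).2 p.2⟩
  fac s j := by obtain ⟨j⟩ := j; exact FamObj.hom_ext rfl (fun a => by rw [FamObj.comp_snd]; simp [Phi, finCofan]; exact Category.comp_id ((s.ι.app ⟨j⟩).snd a))
  uniq s m hm := FamObj.hom_ext
    (funext fun (p : Σ j, f j) => congrFun (congrArg PSigma.fst (hm ⟨p.1⟩)) p.2)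
    (fun (p : Σ j, f j) => by have h := FamObj.hom_congr (hm ⟨p.1⟩) p.2; erw [FamObj.comp_snd] at h; simp [Phi, finCofan] at h; exact h)

instance Phi_preserves : PreservesFiniteCoproducts (Phi C) where
  preserves n :=
    { preservesColimit := fun {K} => by
        haveI := preservesColimit_of_preserves_colimit_cocone
          (finCofanIsColimit (Fin n) (K.obj ∘ Discrete.mk))
          (PhiMapIsColimit C (Fin n) (K.obj ∘ Discrete.mk))
        exact preservesColimit_of_iso_diagram (Phi C) Discrete.natIsoFunctor.symm }

end Coprod

open MonoidalCategory

/-- if `C` is an affine symmetric monoidal category (its unit is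
terminal), then there is a fully faithful strong monoidal functor
`Φ : (FinSet, ×, 1) → (C⁺, ⊗, I)` which preserves finite coproducts, where
`Φ(A) = {I}_{a∈A}` is the constant family at the unit and `Φ(φ) = (φ, {id_I})`. -/
theorem finset_embeds_into_affine_coproduct_completion
    (C : Type u) [Category.{v} C] [MonoidalCategory C]
    (hI : IsTerminal (𝟙_ C)) :
    ∃ (N : MonoidalCategory FintypeCat.{0}) (M : MonoidalCategory (FamObj C)),
      letI : MonoidalCategory FintypeCat.{0} := N
      letI : MonoidalCategory (FamObj C) := M
      -- the monoidal structure on `FinSet` is the cartesian one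
      (∀ A B : FintypeCat.{0}, (A ⊗ B) = FintypeCat.of (A × B)) ∧
      ((𝟙_ FintypeCat.{0}) = FintypeCat.of PUnit) ∧
      -- the monoidal structure on `C⁺` is the one induced from `C`
      (∀ X Y : FamObj C,
        (X ⊗ Y) = { ι := X.ι × Y.ι, obj := fun p => X.obj p.1 ⊗ Y.obj p.2 }) ∧
      ((𝟙_ (FamObj C)) = { ι := PUnit, obj := fun _ => (𝟙_ C) }) ∧
      ∃ Φ : FintypeCat.{0} ⥤ FamObj C,
        (∀ A : FintypeCat.{0}, Φ.obj A = { ι := A, fin := FintypeCat.fintype, obj := fun _ => (𝟙_ C) }) ∧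
        (∀ (A B : FintypeCat.{0}) (f : A ⟶ B),
          HEq (Φ.map f)
            (show ({ ι := A, fin := FintypeCat.fintype, obj := fun _ => (𝟙_ C) } : FamObj C) ⟶
                ({ ι := B, fin := FintypeCat.fintype, obj := fun _ => (𝟙_ C) } : FamObj C) from
              ⟨fun a => f a, fun _ => 𝟙 (𝟙_ C)⟩)) ∧
        Φ.Full ∧ Φ.Faithful ∧
        Nonempty (Φ.Monoidal) ∧
        Nonempty (PreservesFiniteCoproducts Φ) := by
  letI := finMC
  letI := famMC C
  refine ⟨finMC, famMC C, fun A B => rfl, rfl, fun X Y => rfl, rfl, Phi C,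
    fun A => rfl, fun A B f => heq_of_eq rfl, Phi_full C hI, Phi_faithful C,
    ⟨(PhiCore C hI).toMonoidal⟩, ⟨Phi_preserves C⟩⟩
end
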